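/- For ε > 0 and r > 0, the integral I₃ᵤᵤ = (1/2)∫₀^∞ k³ e^{−εk} (∫_{−1}^{1} u² cos(kru) du) dk equals (2ε² − 6r²)/(ε² + r²)³. -/

import Mathlib

open MeasureTheory Real

private lemma hasDerivAt_quad_cexp (A B C w : ℂ) (x : ℝ) :
    HasDerivAt (fun t : ℝ => (A * t ^ 2 + B * t + C) * Complex.exp (w * t))
      ((A * x ^ 2 + B * x + C) * w * Complex.exp (w * x)
        + (2 * A * x + B) * Complex.exp (w * x)) x := by
  have hid : HasDerivAt (fun t : ℝ => (t : ℂ)) 1 x := by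
    simpa using (hasDerivAt_id x).ofReal_comp
  have hexp : HasDerivAt (fun t : ℝ => Complex.exp (w * t))
      (Complex.exp (w * x) * w) x := by
    simpa using (hid.const_mul w).cexp
  have hsq : HasDerivAt (fun t : ℝ => ((t : ℂ)) ^ 2) ((2 : ℂ) * x) x := by
    have := hid.mul hid
    have h2 : HasDerivAt (fun t : ℝ => (t : ℂ) * (t : ℂ)) ((1 : ℂ) * x + x * 1) x := this
    have h3 : HasDerivAt (fun t : ℝ => ((t : ℂ)) ^ 2) ((1 : ℂ) * x + x * 1) x := by
      refine h2.congr_deriv ?_ |>.congr_of_eventuallyEq ?_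
      · rfl
      · filter_upwards with t; ring
    convert h3 using 1; ring
  have hpoly : HasDerivAt (fun t : ℝ => A * (t : ℂ) ^ 2 + B * t + C)
      (A * ((2 : ℂ) * x) + B * 1) x := ((hsq.const_mul A).add (hid.const_mul B)).add_const C
  have := hpoly.mul hexp
  refine this.congr_deriv ?_
  ring

private lemma int_pow_exp {ε : ℝ} (hε : 0 < ε) (n : ℕ) :
    IntegrableOn (fun k : ℝ => k ^ n * Real.exp (-ε * k)) (Set.Ioi 0) := by
  have h := integrableOn_rpow_mul_exp_neg_mul_rpow (s := (n : ℝ)) (p := 1)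
    (lt_of_lt_of_le (by norm_num) (Nat.cast_nonneg n)) zero_lt_one hε
  refine h.congr_fun (fun x hx => ?_) measurableSet_Ioi
  dsimp only
  rw [Real.rpow_natCast, Real.rpow_one]

private lemma tendsto_c_pow_exp {ε : ℝ} (hε : 0 < ε) (c : ℝ) (n : ℕ) :
    Filter.Tendsto (fun k : ℝ => c * k ^ n * Real.exp (-ε * k)) Filter.atTop (nhds 0) := by
  have h1 : Filter.Tendsto (fun k : ℝ => ε * k) Filter.atTop Filter.atTop :=
    Filter.Tendsto.const_mul_atTop hε Filter.tendsto_id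
  have h2 := ((tendsto_pow_mul_exp_neg_atTop_nhds_zero n).comp h1).const_mul (c / ε ^ n)
  rw [mul_zero] at h2
  refine h2.congr (fun k => ?_)
  simp only [Function.comp]
  rw [mul_pow]
  field_simp

theorem I3uu_integral (ε r : ℝ) (hε : 0 < ε) (hr : 0 < r) :
    (1 / 2) * ∫ k in Set.Ioi (0 : ℝ),
        k ^ 3 * Real.exp (-ε * k) * ∫ u in (-1 : ℝ)..1, u ^ 2 * Real.cos (k * r * u)
      = (2 * ε ^ 2 - 6 * r ^ 2) / (ε ^ 2 + r ^ 2) ^ 3 := by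
  set z : ℂ := -(ε : ℂ) + (r : ℂ) * Complex.I with hzdef
  have hz0 : z ≠ 0 := by
    intro h
    have := congrArg Complex.re h
    simp [hzdef] at this
    linarith
  set A : ℂ := (r : ℂ) ^ 2 / z with hA
  set B : ℂ := (2 * Complex.I * r - 2 * A) / z with hB
  set C : ℂ := (-2 - B) / z with hC
  have h1 : A * z = (r : ℂ) ^ 2 := by rw [hA, div_mul_cancel₀ _ hz0]
  have h2 : B * z = 2 * Complex.I * r - 2 * A := by rw [hB, div_mul_cancel₀ _ hz0]
  have h3 : C * z = -2 - B := by rw [hC, div_mul_cancel₀ _ hz0]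
  set g : ℝ → ℂ := fun k =>
    (((r * k) ^ 2 - 2 : ℝ) + ((2 * (r * k) : ℝ)) * Complex.I) * Complex.exp (z * k) with hg
  have hzexp : ∀ k : ℝ, ‖Complex.exp (z * k)‖ = Real.exp (-ε * k) := by
    intro k
    rw [Complex.norm_exp]
    congr 1
    simp [hzdef]
  -- derivative identity
  have key : ∀ k : ℝ, (A * (k : ℂ) ^ 2 + B * k + C) * z * Complex.exp (z * k)
      + (2 * A * k + B) * Complex.exp (z * k) = g k := by
    intro k
    show _ = (((r * k) ^ 2 - 2 : ℝ) + ((2 * (r * k) : ℝ)) * Complex.I) * Complex.exp (z * k)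
    push_cast
    linear_combination Complex.exp (z * (k : ℂ)) * ((k : ℂ) ^ 2 * h1 + (k : ℂ) * h2 + h3)
  have hderiv : ∀ k : ℝ, HasDerivAt (fun t : ℝ => (A * t ^ 2 + B * t + C) * Complex.exp (z * t))
      (g k) k := by
    intro k
    have h := hasDerivAt_quad_cexp A B C z k
    rwa [key k] at h
  -- integrability of g
  have hgcont : Continuous g := by
    rw [hg]; fun_prop
  have hgint : IntegrableOn g (Set.Ioi 0) := by
    have hmaj : IntegrableOn (fun k : ℝ => (r ^ 2 * k ^ 2 + 2 * r * k + 2) * Real.exp (-ε * k))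
        (Set.Ioi 0) := by
      have e2 := (int_pow_exp hε 2).const_mul (r ^ 2)
      have e1 := (int_pow_exp hε 1).const_mul (2 * r)
      have e0 := (int_pow_exp hε 0).const_mul 2
      have hsum : IntegrableOn (fun x : ℝ => r ^ 2 * (x ^ 2 * Real.exp (-ε * x))
          + 2 * r * (x ^ 1 * Real.exp (-ε * x)) + 2 * (x ^ 0 * Real.exp (-ε * x)))
          (Set.Ioi 0) := (e2.add e1).add e0
      refine hsum.congr_fun (fun x _ => ?_) measurableSet_Ioi
      simp only [pow_one, pow_zero]
      ring
    refine Integrable.mono' hmaj (hgcont.aestronglyMeasurable.restrict) ?_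
    rw [ae_restrict_iff' measurableSet_Ioi]
    refine Filter.Eventually.of_forall (fun k hk => ?_)
    have hk0 : (0 : ℝ) ≤ k := le_of_lt hk
    show ‖(((r * k) ^ 2 - 2 : ℝ) + ((2 * (r * k) : ℝ)) * Complex.I) * Complex.exp (z * k)‖ ≤ _
    rw [norm_mul, hzexp k]
    have hle : ‖(((r * k) ^ 2 - 2 : ℝ) : ℂ) + ((2 * (r * k) : ℝ)) * Complex.I‖
        ≤ r ^ 2 * k ^ 2 + 2 * r * k + 2 := by
      refine le_trans (norm_add_le _ _) ?_
      rw [norm_mul, Complex.norm_real, Complex.norm_real, Complex.norm_I, mul_one,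
        Real.norm_eq_abs, Real.norm_eq_abs]
      have h1' : |(r * k) ^ 2 - 2| ≤ r ^ 2 * k ^ 2 + 2 := by
        rw [abs_le]
        constructor <;> nlinarith [sq_nonneg (r * k)]
      have h2' : |2 * (r * k)| = 2 * r * k := by
        rw [abs_of_nonneg (by positivity)]; ring
      linarith
    exact mul_le_mul_of_nonneg_right hle (Real.exp_pos _).le
  -- tendsto to 0
  have htend : Filter.Tendsto (fun t : ℝ => (A * t ^ 2 + B * t + C) * Complex.exp (z * t))
      Filter.atTop (nhds 0) := by
    refine squeeze_zero_norm'
      (a := fun k => ‖A‖ * k ^ 2 * Real.exp (-ε * k) + ‖B‖ * k ^ 1 * Real.exp (-ε * k)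
        + ‖C‖ * k ^ 0 * Real.exp (-ε * k)) ?_ ?_
    · filter_upwards [Filter.eventually_ge_atTop (0 : ℝ)] with k hk0
      rw [norm_mul, hzexp k]
      have hb : ‖A * (k : ℂ) ^ 2 + B * k + C‖ ≤ ‖A‖ * k ^ 2 + ‖B‖ * k ^ 1 + ‖C‖ * k ^ 0 := by
        refine le_trans (norm_add_le _ _) ?_
        have t1 : ‖A * (k : ℂ) ^ 2 + B * k‖ ≤ ‖A‖ * k ^ 2 + ‖B‖ * k ^ 1 := by
          refine le_trans (norm_add_le _ _) ?_
          rw [norm_mul, norm_mul, norm_pow, Complex.norm_real, Real.norm_eq_abs,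
            abs_of_nonneg hk0, pow_one]
        simpa using add_le_add t1 (le_refl ‖C‖)
      have := mul_le_mul_of_nonneg_right hb (Real.exp_pos (-ε * k)).le
      calc ‖A * (k:ℂ)^2 + B * k + C‖ * Real.exp (-ε * k)
          ≤ (‖A‖ * k ^ 2 + ‖B‖ * k ^ 1 + ‖C‖ * k ^ 0) * Real.exp (-ε * k) := this
        _ = _ := by ring
    · have := ((tendsto_c_pow_exp hε ‖A‖ 2).add (tendsto_c_pow_exp hε ‖B‖ 1)).add
        (tendsto_c_pow_exp hε ‖C‖ 0)
      simpa using this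
  -- FTC on Ioi 0
  have hFTC : ∫ k in Set.Ioi (0 : ℝ), g k = -C := by
    rw [integral_Ioi_of_hasDerivAt_of_tendsto' (fun x _ => hderiv x) hgint htend]
    simp
  -- pointwise identity on Ioi 0
  have hpoint : Set.EqOn
      (fun k : ℝ => k ^ 3 * Real.exp (-ε * k) * ∫ u in (-1 : ℝ)..1, u ^ 2 * Real.cos (k * r * u))
      (fun k : ℝ => (2 / r ^ 3) * (g k).im) (Set.Ioi 0) := by
    intro k hk
    have hk0 : (0 : ℝ) < k := hk
    have ha : k * r ≠ 0 := by positivity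
    -- inner integral via FTC
    have hF : ∀ u ∈ Set.uIcc (-1 : ℝ) 1,
        HasDerivAt (fun u : ℝ => ((k * r * u) ^ 2 - 2) * Real.sin (k * r * u) / (k * r) ^ 3
          + 2 * u * Real.cos (k * r * u) / (k * r) ^ 2)
          (u ^ 2 * Real.cos (k * r * u)) u := by
      intro u _
      have hlin : HasDerivAt (fun u : ℝ => k * r * u) (k * r) u := by
        simpa using (hasDerivAt_id u).const_mul (k * r)
      have hsin : HasDerivAt (fun u : ℝ => Real.sin (k * r * u))
          (Real.cos (k * r * u) * (k * r)) u := hlin.sin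
      have hcos : HasDerivAt (fun u : ℝ => Real.cos (k * r * u))
          (-Real.sin (k * r * u) * (k * r)) u := hlin.cos
      have hq : HasDerivAt (fun u : ℝ => (k * r * u) ^ 2 - 2)
          ((2 : ℕ) * (k * r * u) ^ 1 * (k * r)) u := (hlin.pow 2).sub_const 2
      have t1 := (hq.mul hsin).div_const ((k * r) ^ 3)
      have hu2 : HasDerivAt (fun u : ℝ => 2 * u) 2 u := by
        simpa using (hasDerivAt_id u).const_mul 2
      have t2 := (hu2.mul hcos).div_const ((k * r) ^ 2)
      have := t1.add t2
      refine this.congr_deriv ?_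
      field_simp
      ring
    have hcont : IntervalIntegrable (fun u : ℝ => u ^ 2 * Real.cos (k * r * u))
        volume (-1) 1 := (by fun_prop : Continuous fun u : ℝ => u ^ 2 * Real.cos (k * r * u)).intervalIntegrable _ _
    have hinner := intervalIntegral.integral_eq_sub_of_hasDerivAt hF hcont
    show k ^ 3 * Real.exp (-ε * k) * ∫ u in (-1 : ℝ)..1, u ^ 2 * Real.cos (k * r * u)
      = (2 / r ^ 3) * (g k).im
    rw [hinner]
    have him : (g k).im = Real.exp (-ε * k) *
        (((r * k) ^ 2 - 2) * Real.sin (r * k) + 2 * (r * k) * Real.cos (r * k)) := by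
      show ((((r * k) ^ 2 - 2 : ℝ) + ((2 * (r * k) : ℝ)) * Complex.I) * Complex.exp (z * k)).im = _
      rw [Complex.mul_im]
      have hre : (z * (k : ℂ)).re = -ε * k := by simp [hzdef]
      have him' : (z * (k : ℂ)).im = r * k := by simp [hzdef]
      have e1 : ((((r * k) ^ 2 - 2 : ℝ) : ℂ) + ((2 * (r * k) : ℝ) : ℂ) * Complex.I).re
          = (r * k) ^ 2 - 2 := by
        rw [Complex.add_re, Complex.ofReal_re, Complex.mul_I_re, Complex.ofReal_im]
        ring
      have e2 : ((((r * k) ^ 2 - 2 : ℝ) : ℂ) + ((2 * (r * k) : ℝ) : ℂ) * Complex.I).im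
          = 2 * (r * k) := by
        rw [Complex.add_im, Complex.ofReal_im, Complex.mul_I_im, Complex.ofReal_re]
        ring
      rw [e1, e2, Complex.exp_re, Complex.exp_im, hre, him']
      ring
    rw [him]
    rw [show r * k = k * r by ring]
    have hsin1 : Real.sin (k * r * 1) = Real.sin (k * r) := by norm_num
    have hcos1 : Real.cos (k * r * 1) = Real.cos (k * r) := by norm_num
    have hsinm : Real.sin (k * r * (-1)) = -Real.sin (k * r) := by
      rw [show k * r * (-1) = -(k * r) by ring, Real.sin_neg]
    have hcosm : Real.cos (k * r * (-1)) = Real.cos (k * r) := by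
      rw [show k * r * (-1) = -(k * r) by ring, Real.cos_neg]
    rw [hsin1, hcos1, hsinm, hcosm]
    field_simp
    ring
  rw [setIntegral_congr_fun measurableSet_Ioi hpoint, integral_const_mul]
  have him2 : ∫ k in Set.Ioi (0 : ℝ), (g k).im = (-C).im := by
    rw [← hFTC]
    exact integral_im hgint
  rw [him2]
  -- final algebra
  have hCval : C = (-2 * (z * z) - 2 * Complex.I * r * z + 2 * r ^ 2) / (z * (z * z)) := by
    rw [hC, hB, hA]
    field_simp
    ring
  have hden : (ε : ℝ) ^ 2 + r ^ 2 ≠ 0 := by positivity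
  have himC : (-C).im = (2 * ε ^ 2 - 6 * r ^ 2) * r ^ 3 / (ε ^ 2 + r ^ 2) ^ 3 := by
    rw [Complex.neg_im, hCval]
    rw [Complex.div_im]
    simp only [hzdef, Complex.normSq_apply, Complex.mul_re, Complex.mul_im,
      Complex.add_re, Complex.add_im, Complex.neg_re, Complex.neg_im,
      Complex.sub_re, Complex.sub_im, Complex.ofReal_re, Complex.ofReal_im,
      Complex.I_re, Complex.I_im,      Complex.one_re, Complex.one_im, Complex.re_ofNat, Complex.im_ofNat]
    push_cast
    rw [show ((r : ℂ) ^ 2).re = r ^ 2 by simp [pow_two, Complex.mul_re],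
      show ((r : ℂ) ^ 2).im = 0 by simp [pow_two, Complex.mul_im]]
    have h6 : ε ^ 2 * r ^ 4 * 3 + ε ^ 4 * r ^ 2 * 3 + ε ^ 6 + r ^ 6 ≠ 0 := by positivity
    field_simp [h6]
    have hDt : (ε ^ 2 * r ^ 4 * 3 + ε ^ 4 * r ^ 2 * 3 + ε ^ 6 + r ^ 6)
        * (ε ^ 2 * r ^ 4 * 3 + ε ^ 4 * r ^ 2 * 3 + ε ^ 6 + r ^ 6)⁻¹ = 1 := mul_inv_cancel₀ h6
    linear_combination (ε ^ 2 * r ^ 3 * 2 - r ^ 5 * 6) * hDt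
  rw [himC]
  field_simp
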